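/- Let (H, ▷) be a post-Hopf algebra. Then for all x, y ∈ H: (i) x▷1 = ε(x)1; (ii) 1▷x = x; (iii) S(x▷y) = x▷S(y), where S is the antipode of H. -/

import Mathlib

open scoped TensorProduct
open Coalgebra
set_option linter.unusedSectionVars false

universe w

section helpers
variable {R H : Type*} [CommRing R] [AddCommGroup H] [Module R H] [Coalgebra R H]

lemma sum_counit_smul {ι : Type*} (a : H) (r : Coalgebra.Repr R a ι) :
    ∑ i ∈ r.index, counit (R := R) (r.left i) • r.right i = a := by
  have h1 := Coalgebra.sum_counit_tmul_eq r
  have h2 := congrArg (TensorProduct.lid R H) h1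
  simp only [map_sum, TensorProduct.lid_tmul] at h2
  simpa using h2

lemma sum_smul_counit {ι : Type*} (a : H) (r : Coalgebra.Repr R a ι) :
    ∑ i ∈ r.index, counit (R := R) (r.right i) • r.left i = a := by
  have h1 := Coalgebra.sum_tmul_counit_eq r
  have h2 := congrArg (TensorProduct.rid R H) h1
  simp only [map_sum, TensorProduct.rid_tmul] at h2
  simpa using h2

noncomputable def mul3 (m : H →ₗ[R] H →ₗ[R] H) : H ⊗[R] (H ⊗[R] H) →ₗ[R] H :=
  TensorProduct.lift ((LinearMap.llcomp R (H ⊗[R] H) H H).flip (TensorProduct.lift m) ∘ₗ m)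

@[simp] lemma mul3_tmul (m : H →ₗ[R] H →ₗ[R] H) (a b c : H) :
    mul3 m (a ⊗ₜ[R] (b ⊗ₜ[R] c)) = m a (m b c) := by
  simp [mul3]

lemma assoc_swap {ι : Type*} {κ Λ : ι → Type*} (m : H →ₗ[R] H →ₗ[R] H) (f g k : H →ₗ[R] H) (a : H) (r : Coalgebra.Repr R a ι)
    (a₁ : ∀ i : r.ι, Coalgebra.Repr R (r.left i) (κ i))
    (a₂ : ∀ i : r.ι, Coalgebra.Repr R (r.right i) (Λ i)) :
    ∑ i ∈ r.index, ∑ j ∈ (a₂ i).index,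
      m (f (r.left i)) (m (g ((a₂ i).left j)) (k ((a₂ i).right j)))
    = ∑ i ∈ r.index, ∑ j ∈ (a₁ i).index,
      m (f ((a₁ i).left j)) (m (g ((a₁ i).right j)) (k (r.right i))) := by
  have key := Coalgebra.sum_map_tmul_tmul_eq (R := R) f g k a (repr := r) (a₁ := a₁) (a₂ := a₂)
  have h2 := congrArg (mul3 m) key
  simpa [map_sum] using h2

noncomputable def reindex {ι : Type*} {a : H} (r : Coalgebra.Repr R a ι) :
    Coalgebra.Repr R a (ULift.{w} (Fin r.index.card)) :=
  ⟨(Finset.univ : Finset (ULift (Fin r.index.card))),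
   fun i => r.left (r.index.equivFin.symm i.down),
   fun i => r.right (r.index.equivFin.symm i.down), by
    rw [← r.eq, ← Finset.sum_coe_sort r.index
      (fun x => r.left x ⊗ₜ[R] r.right x)]
    exact Fintype.sum_equiv (Equiv.ulift.trans r.index.equivFin.symm) _ _ (fun i => rfl)⟩

lemma reindex_sum {M : Type*} [AddCommMonoid M] {ι : Type*} {a : H} (r : Coalgebra.Repr R a ι) (F : H → H → M) :
    ∑ i ∈ (reindex r).index, F ((reindex r).left i) ((reindex r).right i)
      = ∑ i ∈ r.index, F (r.left i) (r.right i) := by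
  rw [← Finset.sum_coe_sort r.index (fun x => F (r.left x) (r.right x))]
  exact Fintype.sum_equiv (Equiv.ulift.trans r.index.equivFin.symm) _ _ (fun i => rfl)

lemma sum_swap_dep {M : Type*} [AddCommMonoid M] {ι₁ β : Type*} {κ : ι₁ → Type*}
    (s : Finset ι₁) (t : ∀ i, Finset (κ i)) (u : Finset β) (f : ∀ i, κ i → β → M) :
    ∑ i ∈ s, ∑ k ∈ t i, ∑ l ∈ u, f i k l = ∑ l ∈ u, ∑ i ∈ s, ∑ k ∈ t i, f i k l :=
  (Finset.sum_congr rfl fun i _ => Finset.sum_comm).trans Finset.sum_comm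

lemma sum_swap_dep' {M : Type*} [AddCommMonoid M] {κ β : Type*} {γ : β → Type*}
    (t : Finset κ) (u : Finset β) (v : ∀ b, Finset (γ b)) (g : κ → ∀ b, γ b → M) :
    ∑ k ∈ t, ∑ j ∈ u, ∑ l ∈ v j, g k j l = ∑ j ∈ u, ∑ l ∈ v j, ∑ k ∈ t, g k j l :=
  Finset.sum_comm.trans (Finset.sum_congr rfl fun j _ => Finset.sum_comm)

end helpers

variable (R H : Type*) [CommRing R] [AddCommGroup H] [Module R H] [Coalgebra R H]

/-- A Hopf algebra structure (multiplication, unit, antipode) on the coalgebra `H`: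
the multiplication is associative with unit, comultiplication and counit are algebra
maps, and `S` is an antipode (expressed via arbitrary Sweedler representations). -/
structure HopfMul where
  mul : H →ₗ[R] H →ₗ[R] H
  one : H
  S : H →ₗ[R] H
  mul_assoc : ∀ a b c : H, mul (mul a b) c = mul a (mul b c)
  one_mul : ∀ a : H, mul one a = a
  mul_one : ∀ a : H, mul a one = a
  comul_mul : ∀ (a b : H) {ι κ : Type*} (ra : Coalgebra.Repr R a ι) (rb : Coalgebra.Repr R b κ),
    comul (R := R) (mul a b) = ∑ i ∈ ra.index, ∑ j ∈ rb.index,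
      mul (ra.left i) (rb.left j) ⊗ₜ[R] mul (ra.right i) (rb.right j)
  comul_one : comul (R := R) one = one ⊗ₜ[R] one
  counit_mul : ∀ a b : H, counit (R := R) (mul a b) = counit (R := R) a * counit (R := R) b
  counit_one : counit (R := R) one = 1
  S_mul_left : ∀ (a : H) {ι : Type*} (r : Coalgebra.Repr R a ι),
    ∑ i ∈ r.index, mul (S (r.left i)) (r.right i) = counit (R := R) a • one
  S_mul_right : ∀ (a : H) {ι : Type*} (r : Coalgebra.Repr R a ι),
    ∑ i ∈ r.index, mul (r.left i) (S (r.right i)) = counit (R := R) a • one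

/-- A post-Hopf algebra structure `▷ = tr` on the Hopf algebra `(H, h)`:
`tr` is a coalgebra map satisfying `x▷(y·z) = (x₍₁₎▷y)·(x₍₂₎▷z)` and
`x▷(y▷z) = (x₍₁₎·(x₍₂₎▷y))▷z`, and `θ_x(y) = x▷y` is convolution invertible with
convolution inverse `ψ = inv`. -/
structure PostHopf (h : HopfMul R H) where
  tr : H →ₗ[R] H →ₗ[R] H
  inv : H →ₗ[R] H →ₗ[R] H
  comul_tr : ∀ (x y : H) {ι κ : Type*} (rx : Coalgebra.Repr R x ι) (ry : Coalgebra.Repr R y κ),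
    comul (R := R) (tr x y) = ∑ i ∈ rx.index, ∑ j ∈ ry.index,
      tr (rx.left i) (ry.left j) ⊗ₜ[R] tr (rx.right i) (ry.right j)
  counit_tr : ∀ x y : H,
    counit (R := R) (tr x y) = counit (R := R) x * counit (R := R) y
  tr_mul : ∀ (x y z : H) {ι : Type*} (r : Coalgebra.Repr R x ι),
    tr x (h.mul y z) = ∑ i ∈ r.index, h.mul (tr (r.left i) y) (tr (r.right i) z)
  tr_tr : ∀ (x y z : H) {ι : Type*} (r : Coalgebra.Repr R x ι),
    tr x (tr y z) = ∑ i ∈ r.index, tr (h.mul (r.left i) (tr (r.right i) y)) z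
  inv_tr : ∀ (x y : H) {ι : Type*} (r : Coalgebra.Repr R x ι),
    ∑ i ∈ r.index, inv (r.left i) (tr (r.right i) y) = counit (R := R) x • y
  tr_inv : ∀ (x y : H) {ι : Type*} (r : Coalgebra.Repr R x ι),
    ∑ i ∈ r.index, tr (r.left i) (inv (r.right i) y) = counit (R := R) x • y

section main
variable {R H : Type*} [CommRing R] [AddCommGroup H] [Module R H] [Coalgebra R H]

noncomputable def oneRepr (h : HopfMul R H) : Coalgebra.Repr R h.one PUnit :=
  ⟨({PUnit.unit} : Finset PUnit), fun _ => h.one, fun _ => h.one, by simpa using h.comul_one.symm⟩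

@[simp] lemma oneRepr_index (h : HopfMul R H) : (oneRepr h).index = ({PUnit.unit} : Finset PUnit) := rfl
@[simp] lemma oneRepr_left (h : HopfMul R H) (i) : (oneRepr h).left i = h.one := rfl
@[simp] lemma oneRepr_right (h : HopfMul R H) (i) : (oneRepr h).right i = h.one := rfl

noncomputable def trOneRepr (h : HopfMul R H) (P : PostHopf R H h) {a : H} {ι : Type*}
    (r : Coalgebra.Repr R a ι) : Coalgebra.Repr R (P.tr a h.one) ι :=
  ⟨r.index, fun i => P.tr (r.left i) h.one, fun i => P.tr (r.right i) h.one, by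
    rw [P.comul_tr a h.one r (oneRepr h)]; simp⟩

@[simp] lemma trOneRepr_index (h : HopfMul R H) (P : PostHopf R H h) {a : H} {ι : Type*}
    (r : Coalgebra.Repr R a ι) : (trOneRepr h P r).index = r.index := rfl
@[simp] lemma trOneRepr_left (h : HopfMul R H) (P : PostHopf R H h) {a : H} {ι : Type*}
    (r : Coalgebra.Repr R a ι) (i) : (trOneRepr h P r).left i = P.tr (r.left i) h.one := rfl
@[simp] lemma trOneRepr_right (h : HopfMul R H) (P : PostHopf R H h) {a : H} {ι : Type*}
    (r : Coalgebra.Repr R a ι) (i) : (trOneRepr h P r).right i = P.tr (r.right i) h.one := rfl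

noncomputable def trRepr (h : HopfMul R H) (P : PostHopf R H h) {a b : H} {ι κ : Type*}
    (ra : Coalgebra.Repr R a ι) (rb : Coalgebra.Repr R b κ) : Coalgebra.Repr R (P.tr a b) (ι × κ) :=
  ⟨ra.index ×ˢ rb.index, fun p => P.tr (ra.left p.1) (rb.left p.2),
    fun p => P.tr (ra.right p.1) (rb.right p.2), by
    rw [P.comul_tr a b ra rb, Finset.sum_product]⟩

@[simp] lemma trRepr_index (h : HopfMul R H) (P : PostHopf R H h) {a b : H} {ι κ : Type*}
    (ra : Coalgebra.Repr R a ι) (rb : Coalgebra.Repr R b κ) :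
    (trRepr h P ra rb).index = ra.index ×ˢ rb.index := rfl
@[simp] lemma trRepr_left (h : HopfMul R H) (P : PostHopf R H h) {a b : H} {ι κ : Type*}
    (ra : Coalgebra.Repr R a ι) (rb : Coalgebra.Repr R b κ) (p) :
    (trRepr h P ra rb).left p = P.tr (ra.left p.1) (rb.left p.2) := rfl
@[simp] lemma trRepr_right (h : HopfMul R H) (P : PostHopf R H h) {a b : H} {ι κ : Type*}
    (ra : Coalgebra.Repr R a ι) (rb : Coalgebra.Repr R b κ) (p) :
    (trRepr h P ra rb).right p = P.tr (ra.right p.1) (rb.right p.2) := rfl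

lemma tr_one (h : HopfMul R H) (P : PostHopf R H h) (x : H) :
    P.tr x h.one = counit (R := R) x • h.one := by
  classical
  set rx := reindex (ℛ R x) with hrxdef
  set r1 : ∀ i : rx.ι, Coalgebra.Repr R (rx.left i) (ULift (Fin (ℛ R (rx.left i)).index.card)) := fun i => reindex (ℛ R (rx.left i)) with hr1
  set r2 : ∀ i : rx.ι, Coalgebra.Repr R (rx.right i) (ULift (Fin (ℛ R (rx.right i)).index.card)) := fun i => reindex (ℛ R (rx.right i)) with hr2
  have step1 : P.tr x h.one
      = ∑ i ∈ rx.index, counit (R := R) (rx.left i) • P.tr (rx.right i) h.one := by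
    conv_lhs => rw [← sum_counit_smul x rx]
    simp only [map_sum, LinearMap.sum_apply, map_smul, LinearMap.smul_apply]
  have step2 : ∀ i, counit (R := R) (rx.left i) • h.one
      = ∑ j ∈ (r1 i).index,
          h.mul (h.S (P.tr ((r1 i).left j) h.one)) (P.tr ((r1 i).right j) h.one) := by
    intro i
    have hs := h.S_mul_left (P.tr (rx.left i) h.one) (reindex (trOneRepr h P (r1 i)))
    rw [P.counit_tr, h.counit_one, mul_one] at hs
    have hs2 := (reindex_sum (trOneRepr h P (r1 i)) (fun a b => h.mul (h.S a) b)).symm.trans hs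
    simpa using hs2.symm
  calc P.tr x h.one
      = ∑ i ∈ rx.index, h.mul (counit (R := R) (rx.left i) • h.one)
          (P.tr (rx.right i) h.one) := by
        rw [step1]
        refine Finset.sum_congr rfl fun i _ => ?_
        rw [map_smul, LinearMap.smul_apply, h.one_mul]
    _ = ∑ i ∈ rx.index, ∑ j ∈ (r1 i).index,
          h.mul (h.mul (h.S (P.tr ((r1 i).left j) h.one)) (P.tr ((r1 i).right j) h.one))
            (P.tr (rx.right i) h.one) := by
        refine Finset.sum_congr rfl fun i _ => ?_
        rw [step2 i, map_sum, LinearMap.sum_apply]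
    _ = ∑ i ∈ rx.index, ∑ j ∈ (r1 i).index,
          h.mul (h.S (P.tr ((r1 i).left j) h.one))
            (h.mul (P.tr ((r1 i).right j) h.one) (P.tr (rx.right i) h.one)) := by
        simp only [h.mul_assoc]
    _ = ∑ i ∈ rx.index, ∑ j ∈ (r2 i).index,
          h.mul (h.S (P.tr (rx.left i) h.one))
            (h.mul (P.tr ((r2 i).left j) h.one) (P.tr ((r2 i).right j) h.one)) := by
        have hsw := assoc_swap h.mul (h.S ∘ₗ P.tr.flip h.one) (P.tr.flip h.one)
          (P.tr.flip h.one) x rx r1 r2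
        simpa only [LinearMap.coe_comp, Function.comp_apply, LinearMap.flip_apply]
          using hsw.symm
    _ = ∑ i ∈ rx.index, h.mul (h.S (P.tr (rx.left i) h.one)) (P.tr (rx.right i) h.one) := by
        refine Finset.sum_congr rfl fun i _ => ?_
        have htm := P.tr_mul (rx.right i) h.one h.one (r2 i)
        rw [h.one_mul] at htm
        rw [← map_sum, ← htm]
    _ = counit (R := R) (P.tr x h.one) • h.one := by
        have := h.S_mul_left (P.tr x h.one) (reindex (trOneRepr h P rx))
        have h2 := (reindex_sum (trOneRepr h P rx) (fun a b => h.mul (h.S a) b)).symm.trans this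
        simpa using h2
    _ = counit (R := R) x • h.one := by rw [P.counit_tr, h.counit_one, mul_one]

lemma one_tr (h : HopfMul R H) (P : PostHopf R H h) (x : H) : P.tr h.one x = x := by
  have h11 : P.tr h.one h.one = h.one := by rw [tr_one, h.counit_one, one_smul]
  have key : ∀ w : H, P.inv h.one (P.tr h.one w) = w := by
    intro w
    have := P.inv_tr h.one w (oneRepr h)
    simpa [h.counit_one] using this
  have e1 : P.tr h.one (P.tr h.one x) = P.tr h.one x := by
    have := P.tr_tr h.one h.one x (oneRepr h)
    simpa [h11, h.mul_one] using this
  calc P.tr h.one x = P.inv h.one (P.tr h.one (P.tr h.one x)) := (key _).symm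
    _ = P.inv h.one (P.tr h.one x) := by rw [e1]
    _ = x := key x


lemma tr_S (h : HopfMul R H) (P : PostHopf R H h) (x y : H) :
    P.tr x (h.S y) = h.S (P.tr x y) := by
  classical
  set rx : Coalgebra.Repr R x (ULift.{0} (Fin (ℛ R x).index.card)) := reindex (ℛ R x) with hrx
  set ry : Coalgebra.Repr R y (ULift.{0} (Fin (ℛ R y).index.card)) := reindex (ℛ R y) with hry
  set rxl : ∀ i : rx.ι, Coalgebra.Repr R (rx.left i)
      (ULift (Fin (ℛ R (rx.left i)).index.card)) :=
    fun i => reindex (ℛ R (rx.left i)) with hrxl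
  set rxr : ∀ i : rx.ι, Coalgebra.Repr R (rx.right i)
      (ULift (Fin (ℛ R (rx.right i)).index.card)) :=
    fun i => reindex (ℛ R (rx.right i)) with hrxr
  set ryl : ∀ j : ry.ι, Coalgebra.Repr R (ry.left j)
      (ULift (Fin (ℛ R (ry.left j)).index.card)) :=
    fun j => reindex (ℛ R (ry.left j)) with hryl
  set ryr : ∀ j : ry.ι, Coalgebra.Repr R (ry.right j)
      (ULift (Fin (ℛ R (ry.right j)).index.card)) :=
    fun j => reindex (ℛ R (ry.right j)) with hryr
  have e1 : P.tr x (h.S y) = ∑ i ∈ rx.index, ∑ j ∈ ry.index,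
      (counit (R := R) (rx.left i) * counit (R := R) (ry.left j)) •
        P.tr (rx.right i) (h.S (ry.right j)) := by
    conv_lhs => rw [← sum_counit_smul x rx, ← sum_counit_smul y ry]
    simp only [map_sum, LinearMap.sum_apply, map_smul, LinearMap.smul_apply,
      Finset.smul_sum, smul_smul]
    refine Eq.trans Finset.sum_comm ?_
    refine Finset.sum_congr rfl fun i _ => Finset.sum_congr rfl fun j _ => ?_
    rw [mul_comm]
  have e2 : ∀ (i : rx.ι) (j : ry.ι),
      (counit (R := R) (rx.left i) * counit (R := R) (ry.left j)) • h.one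
      = ∑ k ∈ (rxl i).index, ∑ l ∈ (ryl j).index,
          h.mul (h.S (P.tr ((rxl i).left k) ((ryl j).left l)))
            (P.tr ((rxl i).right k) ((ryl j).right l)) := by
    intro i j
    have hs := h.S_mul_left (P.tr (rx.left i) (ry.left j))
      (reindex (trRepr h P (rxl i) (ryl j)))
    rw [P.counit_tr] at hs
    have hs2 := (reindex_sum (trRepr h P (rxl i) (ryl j))
      (fun a b => h.mul (h.S a) b)).symm.trans hs
    simp only [trRepr_index, trRepr_left, trRepr_right] at hs2
    rw [← Finset.sum_product'] 
    exact hs2.symm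
  calc P.tr x (h.S y)
      = ∑ i ∈ rx.index, ∑ j ∈ ry.index, ∑ k ∈ (rxl i).index, ∑ l ∈ (ryl j).index,
          h.mul (h.S (P.tr ((rxl i).left k) ((ryl j).left l)))
            (h.mul (P.tr ((rxl i).right k) ((ryl j).right l))
              (P.tr (rx.right i) (h.S (ry.right j)))) := by
        rw [e1]
        refine Finset.sum_congr rfl fun i _ => Finset.sum_congr rfl fun j _ => ?_
        have hsm : (counit (R := R) (rx.left i) * counit (R := R) (ry.left j)) •
            P.tr (rx.right i) (h.S (ry.right j))
            = h.mul ((counit (R := R) (rx.left i) * counit (R := R) (ry.left j)) • h.one)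
                (P.tr (rx.right i) (h.S (ry.right j))) := by
          rw [map_smul, LinearMap.smul_apply, h.one_mul]
        rw [hsm, e2 i j]
        simp only [map_sum, LinearMap.sum_apply, h.mul_assoc]
    _ = ∑ j ∈ ry.index, ∑ l ∈ (ryl j).index, ∑ i ∈ rx.index, ∑ k ∈ (rxl i).index,
          h.mul (h.S (P.tr ((rxl i).left k) ((ryl j).left l)))
            (h.mul (P.tr ((rxl i).right k) ((ryl j).right l))
              (P.tr (rx.right i) (h.S (ry.right j)))) := by
        exact Finset.sum_comm.trans
          (Finset.sum_congr rfl fun j _ => sum_swap_dep _ _ _ _)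
    _ = ∑ j ∈ ry.index, ∑ l ∈ (ryl j).index, ∑ i ∈ rx.index, ∑ k ∈ (rxr i).index,
          h.mul (h.S (P.tr (rx.left i) ((ryl j).left l)))
            (h.mul (P.tr ((rxr i).left k) ((ryl j).right l))
              (P.tr ((rxr i).right k) (h.S (ry.right j)))) := by
        refine Finset.sum_congr rfl fun j _ => Finset.sum_congr rfl fun l _ => ?_
        have hsw := assoc_swap h.mul (h.S ∘ₗ P.tr.flip ((ryl j).left l))
          (P.tr.flip ((ryl j).right l)) (P.tr.flip (h.S (ry.right j))) x rx rxl rxr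
        simpa only [LinearMap.coe_comp, Function.comp_apply, LinearMap.flip_apply]
          using hsw.symm
    _ = ∑ i ∈ rx.index, ∑ k ∈ (rxr i).index, ∑ j ∈ ry.index, ∑ l ∈ (ryl j).index,
          h.mul (h.S (P.tr (rx.left i) ((ryl j).left l)))
            (h.mul (P.tr ((rxr i).left k) ((ryl j).right l))
              (P.tr ((rxr i).right k) (h.S (ry.right j)))) := by
        exact (sum_swap_dep _ _ _ _).trans
          (Finset.sum_congr rfl fun i _ => (sum_swap_dep' _ _ _ _).symm)
    _ = ∑ i ∈ rx.index, ∑ k ∈ (rxr i).index, ∑ j ∈ ry.index, ∑ l ∈ (ryr j).index,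
          h.mul (h.S (P.tr (rx.left i) (ry.left j)))
            (h.mul (P.tr ((rxr i).left k) ((ryr j).left l))
              (P.tr ((rxr i).right k) (h.S ((ryr j).right l)))) := by
        refine Finset.sum_congr rfl fun i _ => Finset.sum_congr rfl fun k _ => ?_
        have hsw := assoc_swap h.mul (h.S ∘ₗ P.tr (rx.left i)) (P.tr ((rxr i).left k))
          ((P.tr ((rxr i).right k)) ∘ₗ h.S) y ry ryl ryr
        simpa only [LinearMap.coe_comp, Function.comp_apply] using hsw.symm
    _ = ∑ i ∈ rx.index, ∑ j ∈ ry.index, ∑ l ∈ (ryr j).index, ∑ k ∈ (rxr i).index,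
          h.mul (h.S (P.tr (rx.left i) (ry.left j)))
            (h.mul (P.tr ((rxr i).left k) ((ryr j).left l))
              (P.tr ((rxr i).right k) (h.S ((ryr j).right l)))) := by
        exact Finset.sum_congr rfl fun i _ => sum_swap_dep' _ _ _ _
    _ = ∑ i ∈ rx.index, ∑ j ∈ ry.index, ∑ l ∈ (ryr j).index,
          h.mul (h.S (P.tr (rx.left i) (ry.left j)))
            (P.tr (rx.right i) (h.mul ((ryr j).left l) (h.S ((ryr j).right l)))) := by
        refine Finset.sum_congr rfl fun i _ => Finset.sum_congr rfl fun j _ =>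
          Finset.sum_congr rfl fun l _ => ?_
        rw [← map_sum (h.mul (h.S (P.tr (rx.left i) (ry.left j)))) _ (rxr i).index,
          ← P.tr_mul (rx.right i) ((ryr j).left l) (h.S ((ryr j).right l)) (rxr i)]
    _ = ∑ i ∈ rx.index, ∑ j ∈ ry.index,
          h.mul (h.S (P.tr (rx.left i) (ry.left j)))
            (P.tr (rx.right i) (counit (R := R) (ry.right j) • h.one)) := by
        refine Finset.sum_congr rfl fun i _ => Finset.sum_congr rfl fun j _ => ?_
        rw [← map_sum (h.mul (h.S (P.tr (rx.left i) (ry.left j)))) _ (ryr j).index,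
          ← map_sum (P.tr (rx.right i)) _ (ryr j).index,
          h.S_mul_right (ry.right j) (ryr j)]
    _ = ∑ i ∈ rx.index, ∑ j ∈ ry.index,
          (counit (R := R) (ry.right j) * counit (R := R) (rx.right i)) •
            h.S (P.tr (rx.left i) (ry.left j)) := by
        refine Finset.sum_congr rfl fun i _ => Finset.sum_congr rfl fun j _ => ?_
        rw [map_smul, tr_one h P (rx.right i), map_smul, map_smul, h.mul_one, smul_smul]
    _ = h.S (P.tr x y) := by
        conv_rhs => rw [← sum_smul_counit x rx, ← sum_smul_counit y ry]
        simp only [map_sum, LinearMap.sum_apply, map_smul, LinearMap.smul_apply,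
          Finset.smul_sum, smul_smul]
        exact Finset.sum_comm


end main

/-- In a post-Hopf algebra `(H,▷)`: `x▷1 = ε(x)1`, `1▷x = x` and `S(x▷y) = x▷S(y)`. -/
theorem postHopf_basic (h : HopfMul R H) (P : PostHopf R H h) :
    (∀ x : H, P.tr x h.one = counit (R := R) x • h.one) ∧
    (∀ x : H, P.tr h.one x = x) ∧
    (∀ x y : H, h.S (P.tr x y) = P.tr x (h.S y)) :=
  ⟨tr_one h P, one_tr h P, fun x y => (tr_S h P x y).symm⟩
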